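/- In the cascading-failure model, suppose G₀ is bipartite with the two sides of the bipartition exactly V_src and V_ld, and α ≥ |V_src|. Then for every set S ⊆ V, the induced subgraph G₀ − S on V \ S satisfies F(G₀ − S) = G₀ − S, and hence F*(G₀ − S) = G₀ − S: removing any set of vertices triggers no cascading edge failures, so a load node becomes disconnected only if it is attacked or all of its source neighbors are removed. -/

import Mathlib

open scoped Classical

noncomputable section

variable {V : Type*} [Fintype V] [DecidableEq V]

/-- The number of shortest paths between `s` and `t` in `G` (σ_G(s,t)). -/
def numSP (G : SimpleGraph V) (s t : V) : ℕ :=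
  Nat.card {w : G.Walk s t // w.length = G.dist s t}

/-- The number of shortest paths between `s` and `t` in `G` passing through edge `e`
(σ_G(s,t | e)). -/
def numSPthru (G : SimpleGraph V) (s t : V) (e : Sym2 V) : ℕ :=
  Nat.card {w : G.Walk s t // w.length = G.dist s t ∧ e ∈ w.edges}

/-- `N_G(t)`: the vertices of `Vsrc \ {t}` reachable from `t` in `G` at minimum distance
from `t`. -/
def nearestSources (Vsrc : Finset V) (G : SimpleGraph V) (t : V) : Finset V :=
  ((Vsrc.erase t).filter (fun s => G.Reachable t s)).filter
    (fun s => ∀ s' ∈ (Vsrc.erase t).filter (fun s'' => G.Reachable t s''),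
      G.dist t s ≤ G.dist t s')

/-- The load of edge `e` in `G`:
`load_G(e) = Σ_{t ∈ Vld} Σ_{s ∈ N_G(t)} σ_G(s,t|e) / (|N_G(t)|·σ_G(s,t))`. -/
def eload (Vsrc Vld : Finset V) (G : SimpleGraph V) (e : Sym2 V) : ℝ :=
  ∑ t ∈ Vld, ∑ s ∈ nearestSources Vsrc G t,
    (numSPthru G s t e : ℝ) / (((nearestSources Vsrc G t).card : ℝ) * (numSP G s t : ℝ))

/-- The failure operator: removes every edge whose current load exceeds its capacity
`c_e = (1+α)·load_{G₀}(e)`. -/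
def Fop (Vsrc Vld : Finset V) (G0 : SimpleGraph V) (α : ℝ) (G : SimpleGraph V) :
    SimpleGraph V where
  Adj u v := G.Adj u v ∧ eload Vsrc Vld G s(u, v) ≤ (1 + α) * eload Vsrc Vld G0 s(u, v)
  symm := by
    constructor
    intro u v h
    refine ⟨h.1.symm, ?_⟩
    rw [Sym2.eq_swap]
    exact h.2
  loopless := ⟨fun v h => G.loopless.irrefl v h.1⟩

/-- `F*(G)`: the fixed point reached by iterating the failure operator (reached after at
most `|E|+1 ≤ (card V)^2` applications, since each non-trivial application removes an edge). -/
def Fstar (Vsrc Vld : Finset V) (G0 : SimpleGraph V) (α : ℝ) (G : SimpleGraph V) :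
    SimpleGraph V :=
  (Fop Vsrc Vld G0 α)^[Fintype.card V ^ 2] G

/-- `G − S`: the (induced) subgraph obtained by deleting the vertices of `S`. -/
def deleteVerts (G : SimpleGraph V) (S : Finset V) : SimpleGraph V where
  Adj u v := G.Adj u v ∧ u ∉ S ∧ v ∉ S
  symm := ⟨fun u v h => ⟨h.1.symm, h.2.2, h.2.1⟩⟩
  loopless := ⟨fun v h => G.loopless.irrefl v h.1⟩

/-- `disc(G)`: the number of load nodes from which no source (other than itself) is
reachable in `G`. -/
def disc (Vsrc Vld : Finset V) (G : SimpleGraph V) : ℕ :=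
  (Vld.filter (fun t => ∀ s ∈ Vsrc, s ≠ t → ¬ G.Reachable t s)).card

/-- The payoff `p(V_a,V_d) = disc(F*(G₀ − (V_a \ V_d)))`. -/
def payoff (Vsrc Vld : Finset V) (G0 : SimpleGraph V) (α : ℝ) (Va Vd : Finset V) : ℕ :=
  disc Vsrc Vld (Fstar Vsrc Vld G0 α (deleteVerts G0 (Va \ Vd)))


/- ### Auxiliary lemmas -/

lemma walk_length_one_eq {G : SimpleGraph V} {s t : V} (w : G.Walk s t) (hw : w.length = 1) :
    ∃ h : G.Adj s t, w = SimpleGraph.Walk.cons h SimpleGraph.Walk.nil := by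
  cases w with
  | nil => simp at hw
  | @cons _ b _ h p =>
    cases p with
    | nil => exact ⟨h, rfl⟩
    | cons h' p' => simp [SimpleGraph.Walk.length_cons] at hw

lemma numSP_adj {G : SimpleGraph V} {s t : V} (h : G.Adj s t) : numSP G s t = 1 := by
  have hd : G.dist s t = 1 := SimpleGraph.dist_eq_one_iff_adj.mpr h
  unfold numSP
  rw [hd, Nat.card_eq_one_iff_unique]
  constructor
  · constructor
    intro ⟨w1, p1⟩ ⟨w2, p2⟩
    obtain ⟨h1, e1⟩ := walk_length_one_eq w1 p1
    obtain ⟨h2, e2⟩ := walk_length_one_eq w2 p2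
    subst e1; subst e2
    rfl
  · exact ⟨⟨SimpleGraph.Walk.cons h SimpleGraph.Walk.nil, by simp⟩⟩

lemma numSPthru_adj_self {G : SimpleGraph V} {s t : V} (h : G.Adj s t) :
    numSPthru G s t s(s, t) = 1 := by
  have hd : G.dist s t = 1 := SimpleGraph.dist_eq_one_iff_adj.mpr h
  unfold numSPthru
  rw [hd, Nat.card_eq_one_iff_unique]
  constructor
  · constructor
    intro ⟨w1, p1⟩ ⟨w2, p2⟩
    obtain ⟨h1, e1⟩ := walk_length_one_eq w1 p1.1
    obtain ⟨h2, e2⟩ := walk_length_one_eq w2 p2.1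
    subst e1; subst e2
    rfl
  · exact ⟨⟨SimpleGraph.Walk.cons h SimpleGraph.Walk.nil, by simp⟩⟩

lemma numSPthru_adj_ne {G : SimpleGraph V} {s t : V} (h : G.Adj s t) {e : Sym2 V}
    (he : e ≠ s(s, t)) : numSPthru G s t e = 0 := by
  have hd : G.dist s t = 1 := SimpleGraph.dist_eq_one_iff_adj.mpr h
  unfold numSPthru
  rw [hd]
  have : IsEmpty {w : G.Walk s t // w.length = 1 ∧ e ∈ w.edges} := by
    constructor
    intro ⟨w, p1, p2⟩
    obtain ⟨h1, e1⟩ := walk_length_one_eq w p1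
    subst e1
    simp at p2
    exact he p2
  exact Nat.card_of_isEmpty

lemma adj_src_of_ld {G : SimpleGraph V} {Vsrc Vld : Finset V} (hdisj : Vsrc ∩ Vld = ∅)
    (hbip : ∀ u v : V, G.Adj u v → (u ∈ Vsrc ∧ v ∈ Vld) ∨ (u ∈ Vld ∧ v ∈ Vsrc))
    {t s : V} (ht : t ∈ Vld) (h : G.Adj t s) : s ∈ Vsrc := by
  rcases hbip t s h with ⟨h1, _⟩ | ⟨_, h2⟩
  · exact absurd (Finset.mem_inter.mpr ⟨h1, ht⟩) (by simp [hdisj])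
  · exact h2

lemma nearestSources_adj {G : SimpleGraph V} {Vsrc Vld : Finset V} (hdisj : Vsrc ∩ Vld = ∅)
    (hbip : ∀ u v : V, G.Adj u v → (u ∈ Vsrc ∧ v ∈ Vld) ∨ (u ∈ Vld ∧ v ∈ Vsrc))
    {t s : V} (ht : t ∈ Vld) (hs : s ∈ nearestSources Vsrc G t) : G.Adj t s := by
  unfold nearestSources at hs
  simp only [Finset.mem_filter, Finset.mem_erase] at hs
  obtain ⟨⟨⟨hne, hsrc⟩, hreach⟩, hmin⟩ := hs
  obtain ⟨w⟩ := hreach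
  have hd1 : G.dist t s = 1 := by
    cases w with
    | nil => exact absurd rfl hne.symm
    | @cons _ b _ h p =>
      have hb : b ∈ Vsrc := adj_src_of_ld hdisj hbip ht h
      have hmb := hmin b ⟨⟨h.ne', hb⟩, h.reachable⟩
      rw [SimpleGraph.dist_eq_one_iff_adj.mpr h] at hmb
      have hpos : 0 < G.dist t s :=
        SimpleGraph.Reachable.pos_dist_of_ne ⟨SimpleGraph.Walk.cons h p⟩ hne.symm
      omega
  exact SimpleGraph.dist_eq_one_iff_adj.mp hd1

lemma nearestSources_eq {G : SimpleGraph V} {Vsrc Vld : Finset V} (hdisj : Vsrc ∩ Vld = ∅)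
    (hbip : ∀ u v : V, G.Adj u v → (u ∈ Vsrc ∧ v ∈ Vld) ∨ (u ∈ Vld ∧ v ∈ Vsrc))
    {t : V} (ht : t ∈ Vld) : nearestSources Vsrc G t = G.neighborFinset t := by
  ext s
  constructor
  · intro hs
    exact (G.mem_neighborFinset t s).mpr (nearestSources_adj hdisj hbip ht hs)
  · intro hs
    have hadj : G.Adj t s := (G.mem_neighborFinset t s).mp hs
    unfold nearestSources
    simp only [Finset.mem_filter, Finset.mem_erase]
    refine ⟨⟨⟨hadj.ne', adj_src_of_ld hdisj hbip ht hadj⟩, hadj.reachable⟩, ?_⟩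
    intro s' hs'
    rw [SimpleGraph.dist_eq_one_iff_adj.mpr hadj]
    exact SimpleGraph.Reachable.pos_dist_of_ne hs'.2 (Ne.symm hs'.1.1)

lemma eload_adj {G : SimpleGraph V} {Vsrc Vld : Finset V} (hdisj : Vsrc ∩ Vld = ∅)
    (hbip : ∀ u v : V, G.Adj u v → (u ∈ Vsrc ∧ v ∈ Vld) ∨ (u ∈ Vld ∧ v ∈ Vsrc))
    {u v : V} (hu : u ∈ Vld) (huv : G.Adj u v) :
    eload Vsrc Vld G s(u, v) = 1 / (G.degree u : ℝ) := by
  unfold eload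
  rw [Finset.sum_eq_single_of_mem u hu]
  · rw [nearestSources_eq hdisj hbip hu,
      Finset.sum_eq_single_of_mem v ((G.mem_neighborFinset u v).mpr huv)]
    · have hswap : s(u, v) = s(v, u) := Sym2.eq_swap
      rw [hswap, numSPthru_adj_self huv.symm, numSP_adj huv.symm]
      rw [SimpleGraph.card_neighborFinset_eq_degree]
      norm_num
    · intro s hs hsv
      have hadj : G.Adj u s := (G.mem_neighborFinset u s).mp hs
      rw [numSPthru_adj_ne hadj.symm, Nat.cast_zero, zero_div]
      intro heq
      rcases Sym2.eq_iff.mp heq with ⟨h1, h2⟩ | ⟨h1, h2⟩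
      · exact huv.ne' h2
      · exact hsv h2.symm
  · intro t ht htu
    apply Finset.sum_eq_zero
    intro s hs
    have hadj : G.Adj t s := nearestSources_adj hdisj hbip ht hs
    have hsrc : s ∈ Vsrc := adj_src_of_ld hdisj hbip ht hadj
    rw [numSPthru_adj_ne hadj.symm, Nat.cast_zero, zero_div]
    intro heq
    rcases Sym2.eq_iff.mp heq with ⟨h1, h2⟩ | ⟨h1, h2⟩
    · subst h1
      exact absurd (Finset.mem_inter.mpr ⟨hsrc, hu⟩) (by simp [hdisj])
    · exact htu h1.symm

/-- When `G₀` is bipartite with sides exactly `V_src` and `V_ld` and `α ≥ |V_src|`,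
deleting any set `S` of vertices triggers no cascading failure: `F(G₀ − S) = G₀ − S` and
`F*(G₀ − S) = G₀ − S`; consequently a load node becomes disconnected only if it is
attacked or all of its source neighbors are removed. -/
theorem no_cascade_of_bipartite_large_margin {V : Type*} [Fintype V] [DecidableEq V]
    (G0 : SimpleGraph V) (Vsrc Vld : Finset V)
    (hunion : Vsrc ∪ Vld = Finset.univ) (hdisj : Vsrc ∩ Vld = ∅)
    (hedge : ∀ u v : V, G0.Adj u v →
      (u ∈ Vsrc ∧ v ∈ Vld) ∨ (u ∈ Vld ∧ v ∈ Vsrc))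
    (α : ℝ) (hα : (Vsrc.card : ℝ) ≤ α) :
    ∀ S : Finset V,
      Fop Vsrc Vld G0 α (deleteVerts G0 S) = deleteVerts G0 S ∧
      Fstar Vsrc Vld G0 α (deleteVerts G0 S) = deleteVerts G0 S ∧
      (∀ t ∈ Vld,
        (∀ s ∈ Vsrc, s ≠ t →
          ¬ (Fstar Vsrc Vld G0 α (deleteVerts G0 S)).Reachable t s) →
        t ∈ S ∨ ∀ h : V, G0.Adj t h → h ∈ S) := by
  intro S
  set G : SimpleGraph V := deleteVerts G0 S with hG
  have hbipG : ∀ u v : V, G.Adj u v → (u ∈ Vsrc ∧ v ∈ Vld) ∨ (u ∈ Vld ∧ v ∈ Vsrc) :=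
    fun u v h => hedge u v h.1
  -- the key capacity inequality
  have hkey : ∀ u v : V, G.Adj u v →
      eload Vsrc Vld G s(u, v) ≤ (1 + α) * eload Vsrc Vld G0 s(u, v) := by
    have main : ∀ u v : V, G.Adj u v → u ∈ Vld →
        eload Vsrc Vld G s(u, v) ≤ (1 + α) * eload Vsrc Vld G0 s(u, v) := by
      intro u v huv hu
      have h0 : G0.Adj u v := huv.1
      rw [eload_adj hdisj hbipG hu huv, eload_adj hdisj hedge hu h0]
      have hdG : 1 ≤ G.degree u := by
        rw [← SimpleGraph.card_neighborFinset_eq_degree]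
        exact Finset.card_pos.mpr ⟨v, (G.mem_neighborFinset u v).mpr huv⟩
      have hd0 : (G0.degree u : ℝ) ≤ (Vsrc.card : ℝ) := by
        have : G0.neighborFinset u ⊆ Vsrc := by
          intro x hx
          exact adj_src_of_ld hdisj hedge hu ((G0.mem_neighborFinset u x).mp hx)
        exact_mod_cast Finset.card_le_card this
      have hd0pos : (0 : ℝ) < (G0.degree u : ℝ) := by
        have : G.neighborFinset u ⊆ G0.neighborFinset u := by
          intro x hx
          exact (G0.mem_neighborFinset u x).mpr ((G.mem_neighborFinset u x).mp hx).1
        have h1 : 1 ≤ G0.degree u := le_trans hdG (by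
          rw [← SimpleGraph.card_neighborFinset_eq_degree,
            ← SimpleGraph.card_neighborFinset_eq_degree]
          exact Finset.card_le_card this)
        exact_mod_cast h1
      have hdGpos : (0 : ℝ) < (G.degree u : ℝ) := by exact_mod_cast hdG
      have h1 : (1 : ℝ) / (G.degree u : ℝ) ≤ 1 := by
        rw [div_le_one hdGpos]; exact_mod_cast hdG
      have h2 : (1 : ℝ) ≤ (1 + α) * (1 / (G0.degree u : ℝ)) := by
        rw [mul_one_div, le_div_iff₀ hd0pos, one_mul]
        calc (G0.degree u : ℝ) ≤ (Vsrc.card : ℝ) := hd0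
          _ ≤ α := hα
          _ ≤ 1 + α := by linarith
      linarith
    intro u v huv
    rcases hbipG u v huv with ⟨_, hv⟩ | ⟨hu, _⟩
    · rw [Sym2.eq_swap]
      exact main v u huv.symm hv
    · exact main u v huv hu
  have hFop : Fop Vsrc Vld G0 α G = G := by
    ext u v
    constructor
    · intro h; exact h.1
    · intro h; exact ⟨h, hkey u v h⟩
  have hFstar : Fstar Vsrc Vld G0 α G = G := by
    unfold Fstar
    exact Function.iterate_fixed hFop _
  refine ⟨hFop, hFstar, ?_⟩
  intro t ht hall
  by_cases htS : t ∈ S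
  · exact Or.inl htS
  · refine Or.inr fun h hadj => ?_
    by_contra hhS
    have hGadj : G.Adj t h := ⟨hadj, htS, hhS⟩
    have hhsrc : h ∈ Vsrc := adj_src_of_ld hdisj hbipG ht hGadj
    exact hall h hhsrc hGadj.ne' (by rw [hFstar]; exact hGadj.reachable)

end
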